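/- Let n_1, n_2 ≥ 1 with n_1 + n_2 ≥ 3. Let L be the real Lie subalgebra of su(n_1 + n_2) generated by: (a) all block-diagonal matrices diag(A, B) with A ∈ su(n_1), B ∈ su(n_2), and (b) one matrix X_{j,m} which is zero everywhere except for entries i in positions (j,m) and (m,j), for some fixed 1 ≤ j ≤ n_1 and n_1 + 1 ≤ m ≤ n_1 + n_2. Then L = su(n_1 + n_2). -/

import Mathlib

open scoped Matrix

attribute [local instance] LieRing.ofAssociativeRing

namespace Stmt12Aux

open Matrix Complex

variable {n₁ n₂ : ℕ}

/-- su(N) as a real Lie subalgebra. -/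
def su (N : Type*) [Fintype N] [DecidableEq N] : LieSubalgebra ℝ (Matrix N N ℂ) where
  carrier := {M | Mᴴ = -M ∧ M.trace = 0}
  add_mem' := by
    rintro a b ⟨ha1, ha2⟩ ⟨hb1, hb2⟩
    refine ⟨?_, ?_⟩
    · simp [conjTranspose_add, ha1, hb1]; abel
    · simp [trace_add, ha2, hb2]
  zero_mem' := by simp
  smul_mem' := by
    rintro r M ⟨h1, h2⟩
    refine ⟨?_, ?_⟩ <;> simp [conjTranspose_smul, h1, h2]
  lie_mem' := by
    rintro a b ⟨ha1, ha2⟩ ⟨hb1, hb2⟩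
    refine ⟨?_, ?_⟩
    · simp only [Ring.lie_def, conjTranspose_sub, conjTranspose_mul, ha1, hb1, mul_neg,
        neg_mul, neg_neg, neg_sub]
    · simp [Ring.lie_def, trace_sub, trace_mul_comm a b]


lemma std_conjT {N M : Type*} [DecidableEq N] [DecidableEq M] (i : N) (j : M) (c : ℂ) :
    (Matrix.single i j c)ᴴ = Matrix.single j i (star c) := by
  ext x y
  simp only [conjTranspose_apply, Matrix.single, of_apply, apply_ite (star : ℂ → ℂ), star_zero,
    and_comm]

/-- i(E_{ab} + E_{ba}) with a in the first block, b in the second. -/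
def Sc (a : Fin n₁) (b : Fin n₂) : Matrix (Fin n₁ ⊕ Fin n₂) (Fin n₁ ⊕ Fin n₂) ℂ :=
  I • Matrix.single (.inl a) (.inr b) 1 + I • Matrix.single (.inr b) (.inl a) 1

/-- E_{ab} - E_{ba} with a in the first block, b in the second. -/
def Ac (a : Fin n₁) (b : Fin n₂) : Matrix (Fin n₁ ⊕ Fin n₂) (Fin n₁ ⊕ Fin n₂) ℂ :=
  Matrix.single (.inl a) (.inr b) 1 - Matrix.single (.inr b) (.inl a) 1

/-- i(E_{aa} - E_{bb}) with a in the first block, b in the second. -/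
def Dc (a : Fin n₁) (b : Fin n₂) : Matrix (Fin n₁ ⊕ Fin n₂) (Fin n₁ ⊕ Fin n₂) ℂ :=
  I • Matrix.single (.inl a) (.inl a) 1 - I • Matrix.single (.inr b) (.inr b) 1

def D₁ (a k : Fin n₁) : Matrix (Fin n₁ ⊕ Fin n₂) (Fin n₁ ⊕ Fin n₂) ℂ :=
  I • Matrix.single (.inl a) (.inl a) 1 - I • Matrix.single (.inl k) (.inl k) 1

def D₂ (b k : Fin n₂) : Matrix (Fin n₁ ⊕ Fin n₂) (Fin n₁ ⊕ Fin n₂) ℂ :=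
  I • Matrix.single (.inr b) (.inr b) 1 - I • Matrix.single (.inr k) (.inr k) 1

def P₁ (a k : Fin n₁) : Matrix (Fin n₁ ⊕ Fin n₂) (Fin n₁ ⊕ Fin n₂) ℂ :=
  Matrix.single (.inl a) (.inl k) 1 - Matrix.single (.inl k) (.inl a) 1

def P₂ (b k : Fin n₂) : Matrix (Fin n₁ ⊕ Fin n₂) (Fin n₁ ⊕ Fin n₂) ℂ :=
  Matrix.single (.inr b) (.inr k) 1 - Matrix.single (.inr k) (.inr b) 1

lemma lie_D₁_Sc {a k : Fin n₁} (b : Fin n₂) (h : k ≠ a) :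
    ⁅D₁ (n₂ := n₂) a k, Sc a b⁆ = -(Ac a b) := by
  simp only [D₁, Sc, Ac, Ring.lie_def, sub_mul, mul_sub, add_mul, mul_add,
    smul_mul_assoc, mul_smul_comm, smul_smul, I_mul_I,
    Matrix.single_mul_single_same, Matrix.single_mul_single_of_ne, one_mul, mul_one,
    Sum.inl.injEq, Sum.inr.injEq, ne_eq, reduceCtorEq, not_false_iff, h, h.symm,
    smul_zero]
  match_scalars <;> simp [Complex.I_sq] <;> ring

lemma lie_D₂_Sc (a : Fin n₁) {b k : Fin n₂} (h : k ≠ b) :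
    ⁅D₂ (n₁ := n₁) b k, Sc a b⁆ = Ac a b := by
  simp only [D₂, Sc, Ac, Ring.lie_def, sub_mul, mul_sub, add_mul, mul_add,
    smul_mul_assoc, mul_smul_comm, smul_smul, I_mul_I,
    Matrix.single_mul_single_same, Matrix.single_mul_single_of_ne, one_mul, mul_one,
    Sum.inl.injEq, Sum.inr.injEq, ne_eq, reduceCtorEq, not_false_iff, h, h.symm,
    smul_zero]
  match_scalars <;> simp [Complex.I_sq] <;> ring

lemma lie_P₁_Sc {a a' : Fin n₁} (b : Fin n₂) (h : a' ≠ a) :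
    ⁅P₁ (n₂ := n₂) a' a, Sc a b⁆ = Sc a' b := by
  simp only [P₁, Sc, Ring.lie_def, sub_mul, mul_sub, add_mul, mul_add,
    smul_mul_assoc, mul_smul_comm, smul_smul, I_mul_I,
    Matrix.single_mul_single_same, Matrix.single_mul_single_of_ne, one_mul, mul_one,
    Sum.inl.injEq, Sum.inr.injEq, ne_eq, reduceCtorEq, not_false_iff, h, h.symm,
    smul_zero]
  match_scalars <;> simp [Complex.I_sq] <;> ring

lemma lie_P₂_Sc (a : Fin n₁) {b b' : Fin n₂} (h : b' ≠ b) :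
    ⁅P₂ (n₁ := n₁) b' b, Sc a b⁆ = Sc a b' := by
  simp only [P₂, Sc, Ring.lie_def, sub_mul, mul_sub, add_mul, mul_add,
    smul_mul_assoc, mul_smul_comm, smul_smul, I_mul_I,
    Matrix.single_mul_single_same, Matrix.single_mul_single_of_ne, one_mul, mul_one,
    Sum.inl.injEq, Sum.inr.injEq, ne_eq, reduceCtorEq, not_false_iff, h, h.symm,
    smul_zero]
  match_scalars <;> simp [Complex.I_sq] <;> ring

lemma Dc_eq (a : Fin n₁) (b : Fin n₂) :
    Dc a b = (-(1/2) : ℝ) • ⁅Sc a b, Ac a b⁆ := by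
  simp only [Dc, Sc, Ac, Ring.lie_def, sub_mul, mul_sub, add_mul, mul_add,
    smul_mul_assoc, mul_smul_comm, smul_smul, I_mul_I,
    Matrix.single_mul_single_same, Matrix.single_mul_single_of_ne, one_mul, mul_one,
    Sum.inl.injEq, Sum.inr.injEq, ne_eq, reduceCtorEq, not_false_iff,
    smul_zero]
  match_scalars <;> simp [Complex.I_sq] <;> ring


section Span

variable {n₁ n₂ : ℕ} (j : Fin n₁) (m : Fin n₂)

def gens : Set (Matrix (Fin n₁ ⊕ Fin n₂) (Fin n₁ ⊕ Fin n₂) ℂ) :=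
  {M | ∃ (A : Matrix (Fin n₁) (Fin n₁) ℂ) (B : Matrix (Fin n₂) (Fin n₂) ℂ),
      Aᴴ = -A ∧ A.trace = 0 ∧ Bᴴ = -B ∧ B.trace = 0 ∧
      M = Matrix.fromBlocks A 0 0 B} ∪
    {Matrix.of fun a b =>
      if (a = Sum.inl j ∧ b = Sum.inr m) ∨ (a = Sum.inr m ∧ b = Sum.inl j)
      then Complex.I else 0}

noncomputable abbrev L : LieSubalgebra ℝ (Matrix (Fin n₁ ⊕ Fin n₂) (Fin n₁ ⊕ Fin n₂) ℂ) :=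
  LieSubalgebra.lieSpan ℝ _ (gens j m)

lemma X_eq : (Matrix.of fun a b =>
    if (a = Sum.inl j ∧ b = Sum.inr m) ∨ (a = Sum.inr m ∧ b = Sum.inl j)
    then Complex.I else 0) = Sc j m := by
  ext x y
  simp only [Sc, of_apply, Matrix.add_apply, Matrix.smul_apply, Matrix.single, of_apply, smul_eq_mul]
  by_cases h1 : x = Sum.inl j <;> by_cases h2 : y = Sum.inr m <;>
    by_cases h3 : x = Sum.inr m <;> by_cases h4 : y = Sum.inl j <;>
    simp_all <;> simp_all [eq_comm]

lemma block_mem {A : Matrix (Fin n₁) (Fin n₁) ℂ} {B : Matrix (Fin n₂) (Fin n₂) ℂ}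
    (hA : Aᴴ = -A) (htA : A.trace = 0) (hB : Bᴴ = -B) (htB : B.trace = 0) :
    fromBlocks A 0 0 B ∈ L j m :=
  LieSubalgebra.subset_lieSpan (Or.inl ⟨A, B, hA, htA, hB, htB, rfl⟩)

lemma X_mem : Sc j m ∈ L j m := by
  rw [← X_eq]
  exact LieSubalgebra.subset_lieSpan (Or.inr rfl)

lemma P₁_mem {a k : Fin n₁} (h : a ≠ k) : P₁ (n₂ := n₂) a k ∈ L j m := by
  have he : P₁ (n₂ := n₂) a k =
      fromBlocks (Matrix.single a k 1 - Matrix.single k a 1) 0 0 0 := by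
    ext x y
    obtain x | x := x <;> obtain y | y := y <;>
      simp [P₁, Matrix.single, Matrix.fromBlocks]
  rw [he]
  refine block_mem j m ?_ ?_ (by simp) (by simp)
  · simp [conjTranspose_sub, std_conjT]
  · simp [trace_sub, Matrix.trace_single_eq_of_ne _ _ _ h.symm, Matrix.trace_single_eq_of_ne _ _ _ h]

lemma P₂_mem {b k : Fin n₂} (h : b ≠ k) : P₂ (n₁ := n₁) b k ∈ L j m := by
  have he : P₂ (n₁ := n₁) b k =
      fromBlocks 0 0 0 (Matrix.single b k 1 - Matrix.single k b 1) := by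
    ext x y
    obtain x | x := x <;> obtain y | y := y <;>
      simp [P₂, Matrix.single, Matrix.fromBlocks]
  rw [he]
  refine block_mem j m (by simp) (by simp) ?_ ?_
  · simp [conjTranspose_sub, std_conjT]
  · simp [trace_sub, Matrix.trace_single_eq_of_ne _ _ _ h.symm, Matrix.trace_single_eq_of_ne _ _ _ h]

lemma D₁_mem {a k : Fin n₁} (h : a ≠ k) : D₁ (n₂ := n₂) a k ∈ L j m := by
  have he : D₁ (n₂ := n₂) a k =
      fromBlocks (I • Matrix.single a a 1 - I • Matrix.single k k 1) 0 0 0 := by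
    ext x y
    obtain x | x := x <;> obtain y | y := y <;>
      simp [D₁, Matrix.single, Matrix.fromBlocks]
  rw [he]
  refine block_mem j m ?_ ?_ (by simp) (by simp)
  · simp only [conjTranspose_sub, conjTranspose_smul, std_conjT, star_one, Complex.star_def,
      Complex.conj_I, neg_smul, neg_sub_neg, neg_sub]
  · simp [trace_sub, trace_smul]

lemma D₂_mem {b k : Fin n₂} (h : b ≠ k) : D₂ (n₁ := n₁) b k ∈ L j m := by
  have he : D₂ (n₁ := n₁) b k =
      fromBlocks 0 0 0 (I • Matrix.single b b 1 - I • Matrix.single k k 1) := by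
    ext x y
    obtain x | x := x <;> obtain y | y := y <;>
      simp [D₂, Matrix.single, Matrix.fromBlocks]
  rw [he]
  refine block_mem j m (by simp) (by simp) ?_ ?_
  · simp only [conjTranspose_sub, conjTranspose_smul, std_conjT, star_one, Complex.star_def,
      Complex.conj_I, neg_smul, neg_sub_neg, neg_sub]
  · simp [trace_sub, trace_smul]

lemma Sc_mem (a : Fin n₁) (b : Fin n₂) : Sc a b ∈ L j m := by
  have hjb : ∀ b' : Fin n₂, Sc j b' ∈ L j m := by
    intro b'
    by_cases hb : b' = m
    · rw [hb]; exact X_mem j m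
    · rw [← lie_P₂_Sc j hb]
      exact (L j m).lie_mem (P₂_mem j m hb) (X_mem j m)
  by_cases ha : a = j
  · rw [ha]; exact hjb b
  · rw [← lie_P₁_Sc b ha]
    exact (L j m).lie_mem (P₁_mem j m ha) (hjb b)

lemma Ac_mem (hn : 2 ≤ n₁ ∨ 2 ≤ n₂) (a : Fin n₁) (b : Fin n₂) : Ac a b ∈ L j m := by
  rcases hn with hn | hn
  · obtain ⟨k, hk⟩ := Fintype.exists_ne_of_one_lt_card (by simpa using (by omega : 1 < _)) a
    have he : Ac a b = -⁅D₁ (n₂ := n₂) a k, Sc a b⁆ := by rw [lie_D₁_Sc b hk, neg_neg]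
    rw [he]
    exact neg_mem ((L j m).lie_mem (D₁_mem j m hk.symm) (Sc_mem j m a b))
  · obtain ⟨k, hk⟩ := Fintype.exists_ne_of_one_lt_card (by simpa using (by omega : 1 < _)) b
    rw [← lie_D₂_Sc a hk]
    exact (L j m).lie_mem (D₂_mem j m hk.symm) (Sc_mem j m a b)

lemma Dc_mem (hn : 2 ≤ n₁ ∨ 2 ≤ n₂) : Dc j m ∈ L j m := by
  rw [Dc_eq]
  exact (L j m).smul_mem _ ((L j m).lie_mem (Sc_mem j m j m) (Ac_mem j m hn j m))

lemma su_le_mem (hn : 2 ≤ n₁ ∨ 2 ≤ n₂) (M : Matrix (Fin n₁ ⊕ Fin n₂) (Fin n₁ ⊕ Fin n₂) ℂ)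
    (hM1 : Mᴴ = -M) (hM2 : M.trace = 0) : M ∈ L j m := by
  have h1 : ∀ x y, (starRingEnd ℂ) (M y x) = -M x y := fun x y => by
    have := congr_fun (congr_fun hM1 x) y
    simpa [conjTranspose_apply] using this
  have hre : ∀ x, (M x x).re = 0 := fun x => by
    have := congr_arg Complex.re (h1 x x)
    simp only [Complex.conj_re, Complex.neg_re] at this
    linarith
  set A := M.toBlocks₁₁ with hA
  set B := M.toBlocks₂₂ with hB
  have htrre : A.trace.re = 0 := by
    rw [hA, Matrix.trace, Complex.re_sum]
    exact Finset.sum_eq_zero fun a _ => hre (Sum.inl a)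
  have htr : A.trace = (A.trace.im : ℂ) * I := by
    apply Complex.ext <;> simp [htrre]
  have hstar : star A.trace = -A.trace := by
    rw [Complex.star_def]
    exact Complex.ext (by simp [htrre]) (by simp)
  have htrM : B.trace = -A.trace := by
    have hsum : M.trace = A.trace + B.trace := by
      simp [Matrix.trace, Matrix.diag, Fintype.sum_sum_type, hA, hB,
        Matrix.toBlocks₁₁, Matrix.toBlocks₂₂]
    have := hM2
    rw [hsum] at this
    linear_combination this
  have hAskew : Aᴴ = -A := by
    ext a b
    simpa [hA, Matrix.toBlocks₁₁, conjTranspose_apply] using h1 (Sum.inl a) (Sum.inl b)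
  have hBskew : Bᴴ = -B := by
    ext a b
    simpa [hB, Matrix.toBlocks₂₂, conjTranspose_apply] using h1 (Sum.inr a) (Sum.inr b)
  have key : M = fromBlocks (A - A.trace • Matrix.single j j 1) 0 0
        (B + A.trace • Matrix.single m m 1)
      + A.trace.im • Dc j m
      + ∑ a : Fin n₁, ∑ b : Fin n₂,
          ((M (Sum.inl a) (Sum.inr b)).re • Ac a b + (M (Sum.inl a) (Sum.inr b)).im • Sc a b) := by
    ext x y
    obtain x | x := x <;> obtain y | y := y
    · simp [Matrix.sum_apply, Ac, Sc, Dc, Matrix.single, Matrix.fromBlocks,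
        Matrix.toBlocks₁₁, Complex.real_smul, mul_ite, ite_and]
      rw [← htr]
      split_ifs <;> simp [hA, Matrix.toBlocks₁₁]
    · simp [Matrix.sum_apply, Ac, Sc, Dc, Matrix.single, Matrix.fromBlocks,
        Matrix.toBlocks₁₁, Complex.real_smul, mul_ite, ite_and,
        Finset.sum_add_distrib]
    · simp [Matrix.sum_apply, Ac, Sc, Dc, Matrix.single, Matrix.fromBlocks,
        Matrix.toBlocks₁₁, Complex.real_smul, mul_ite, ite_and,
        Finset.sum_add_distrib]
      have hz := h1 (Sum.inr x) (Sum.inl y)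
      have hz' : M (Sum.inr x) (Sum.inl y)
          = -((starRingEnd ℂ) (M (Sum.inl y) (Sum.inr x))) := by
        linear_combination hz
      rw [hz']
      simp [Complex.ext_iff]
    · simp [Matrix.sum_apply, Ac, Sc, Dc, Matrix.single, Matrix.fromBlocks,
        Matrix.toBlocks₂₂, Complex.real_smul, mul_ite, ite_and]
      rw [← htr]
      split_ifs <;> simp [hB, Matrix.toBlocks₂₂]
  rw [key]
  refine add_mem (add_mem ?_ ?_) ?_
  · refine block_mem j m ?_ ?_ ?_ ?_
    · rw [conjTranspose_sub, conjTranspose_smul, std_conjT, hAskew, hstar, star_one]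
      module
    · simp [trace_sub, trace_smul]
    · rw [conjTranspose_add, conjTranspose_smul, std_conjT, hBskew, hstar, star_one]
      module
    · simp [trace_add, trace_smul, htrM]
  · exact (L j m).smul_mem _ (Dc_mem j m hn)
  · exact sum_mem fun a _ => sum_mem fun b _ =>
      add_mem ((L j m).smul_mem _ (Ac_mem j m hn a b)) ((L j m).smul_mem _ (Sc_mem j m a b))

end Span

end Stmt12Aux

open Stmt12Aux

/-- the real Lie algebra generated inside su(n₁+n₂) by all block-diagonal
matrices diag(A,B) with A ∈ su(n₁), B ∈ su(n₂), together with a single off-diagonal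
matrix X_{j,m} (with entries i at positions (j,m) and (m,j), j in the first block and m
in the second), is all of su(n₁+n₂), provided n₁, n₂ ≥ 1 and n₁ + n₂ ≥ 3. -/
theorem stmt12 (n₁ n₂ : ℕ) (h₁ : 1 ≤ n₁) (h₂ : 1 ≤ n₂) (h₃ : 3 ≤ n₁ + n₂)
    (j : Fin n₁) (m : Fin n₂) :
    (LieSubalgebra.lieSpan ℝ (Matrix (Fin n₁ ⊕ Fin n₂) (Fin n₁ ⊕ Fin n₂) ℂ)
        ({M | ∃ (A : Matrix (Fin n₁) (Fin n₁) ℂ) (B : Matrix (Fin n₂) (Fin n₂) ℂ),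
            Aᴴ = -A ∧ A.trace = 0 ∧ Bᴴ = -B ∧ B.trace = 0 ∧
            M = Matrix.fromBlocks A 0 0 B} ∪
          {Matrix.of fun a b =>
            if (a = Sum.inl j ∧ b = Sum.inr m) ∨ (a = Sum.inr m ∧ b = Sum.inl j)
            then Complex.I else 0}) : Set (Matrix (Fin n₁ ⊕ Fin n₂) (Fin n₁ ⊕ Fin n₂) ℂ)) =
      {M : Matrix (Fin n₁ ⊕ Fin n₂) (Fin n₁ ⊕ Fin n₂) ℂ | Mᴴ = -M ∧ M.trace = 0} := by
  have hn : 2 ≤ n₁ ∨ 2 ≤ n₂ := by omega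
  have hsub : gens j m ⊆ (su (Fin n₁ ⊕ Fin n₂) : Set _) := by
    rintro M (⟨A, B, hA, htA, hB, htB, rfl⟩ | rfl)
    · refine ⟨?_, ?_⟩
      · rw [Matrix.fromBlocks_conjTranspose, hA, hB]
        ext x y
        obtain x | x := x <;> obtain y | y := y <;>
          simp [Matrix.fromBlocks]
      · have : (Matrix.fromBlocks A 0 0 B).trace = A.trace + B.trace := by
          simp [Matrix.trace, Matrix.diag, Fintype.sum_sum_type, Matrix.fromBlocks]
        rw [this, htA, htB, add_zero]
    · rw [X_eq j m]
      refine ⟨?_, ?_⟩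
      · simp only [Sc, Matrix.conjTranspose_add, Matrix.conjTranspose_smul, std_conjT,
          star_one, Complex.star_def, Complex.conj_I, neg_smul, neg_add]
        module
      · simp [Sc, Matrix.trace_add, Matrix.trace_smul]
  have hle : L j m ≤ su (Fin n₁ ⊕ Fin n₂) := (LieSubalgebra.lieSpan_le).mpr hsub
  ext M
  constructor
  · intro hM
    exact hle hM
  · intro hM
    exact su_le_mem j m hn M hM.1 hM.2
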